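/- Let V be a Hilbert space, K : V → V bounded with I + K invertible, P the orthogonal projection onto a closed subspace W, and δ > 0. If ‖(I - P) ∘ K ∘ (I + K)⁻¹‖ ≤ 1 - δ, then for every f ∈ V there exists a unique v_N ∈ W with (I + P∘K) v_N = P f, and, setting v := (I+K)⁻¹ f, we have ‖v - v_N‖ ≤ δ⁻¹ ‖(I+K)⁻¹‖ · inf_{w ∈ W} ‖v - w‖. -/

import Mathlib

open ContinuousLinearMap

/-- The orthogonal projection of `V` onto the closed subspace `W`, as an operator `V →L[ℂ] V`. -/
noncomputable def galerkinProj {V : Type*} [NormedAddCommGroup V] [InnerProductSpace ℂ V]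
    (W : Submodule ℂ V) [CompleteSpace W] : V →L[ℂ] V :=
  W.subtypeL ∘L W.orthogonalProjectionOnto

theorem galerkin_quasi_optimality
    {V : Type*} [NormedAddCommGroup V] [InnerProductSpace ℂ V] [CompleteSpace V]
    (K : V →L[ℂ] V) (W : Submodule ℂ V) [CompleteSpace W]
    (J : V →L[ℂ] V) (hJ1 : (1 + K) ∘L J = 1) (hJ2 : J ∘L (1 + K) = 1)
    (δ : ℝ) (hδ : 0 < δ)
    (hyp : ‖((1 : V →L[ℂ] V) - galerkinProj W) ∘L (K ∘L J)‖ ≤ 1 - δ)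
    (f : V) :
    ∃ vN : V, vN ∈ W ∧ (1 + galerkinProj W ∘L K) vN = galerkinProj W f ∧
      (∀ w ∈ W, (1 + galerkinProj W ∘L K) w = galerkinProj W f → w = vN) ∧
      ‖J f - vN‖ ≤ δ⁻¹ * ‖J‖ * Metric.infDist (J f) (W : Set V) := by
  set P : V →L[ℂ] V := galerkinProj W with hP
  have hPapp : ∀ y : V, P y = (W.orthogonalProjectionOnto y : V) := fun y => rfl
  have hPmem : ∀ y : V, P y ∈ W := fun y => by rw [hPapp]; exact (W.orthogonalProjectionOnto y).2
  have hJ1' : ∀ a : V, J a + K (J a) = a := by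
    intro a
    have := ContinuousLinearMap.ext_iff.mp hJ1 a
    simpa [comp_apply, add_apply, one_apply_eq_self] using this
  have hJ2' : ∀ a : V, J (a + K a) = a := by
    intro a
    have := ContinuousLinearMap.ext_iff.mp hJ2 a
    simpa [comp_apply, add_apply, one_apply_eq_self] using this
  set x : V →L[ℂ] V := ((1 : V →L[ℂ] V) - P) ∘L (K ∘L J) with hx
  have hxlt : ‖x‖ < 1 := lt_of_le_of_lt hyp (by linarith)
  set u : (V →L[ℂ] V)ˣ := Units.oneSub x hxlt with hu
  have huval : (u : V →L[ℂ] V) = 1 - x := rfl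
  -- key factorization, pointwise
  have key : ∀ a : V, (1 + P ∘L K) a = ((1 : V →L[ℂ] V) - x) ((1 + K) a) := by
    intro a
    simp only [hx, add_apply, one_apply_eq_self, comp_apply, sub_apply, hJ2']
    abel
  have hui : ∀ b : V, ((1 : V →L[ℂ] V) - x) ((↑u⁻¹ : V →L[ℂ] V) b) = b := by
    intro b
    have h := congrArg (fun T : V →L[ℂ] V => T b) u.mul_inv
    simpa only [ContinuousLinearMap.mul_apply, huval, one_apply_eq_self] using h
  have hiu : ∀ b : V, (↑u⁻¹ : V →L[ℂ] V) (((1 : V →L[ℂ] V) - x) b) = b := by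
    intro b
    have h := congrArg (fun T : V →L[ℂ] V => T b) u.inv_mul
    simpa only [ContinuousLinearMap.mul_apply, huval, one_apply_eq_self] using h
  have hnorm : ∀ b : V, ‖(↑u⁻¹ : V →L[ℂ] V) b‖ ≤ δ⁻¹ * ‖b‖ := by
    intro b
    set y := (↑u⁻¹ : V →L[ℂ] V) b with hy
    have h1 : y - x y = b := by
      have := hui b
      simpa [sub_apply, one_apply_eq_self] using this
    have h2 : ‖y‖ ≤ ‖b‖ + ‖x y‖ := by
      have hy2 : y = b + x y := by rw [← h1]; abel
      conv_lhs => rw [hy2]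
      exact norm_add_le _ _
    have h3 : ‖x y‖ ≤ (1 - δ) * ‖y‖ :=
      le_trans (x.le_opNorm y) (mul_le_mul_of_nonneg_right hyp (norm_nonneg _))
    have h4 : δ * ‖y‖ ≤ ‖b‖ := by nlinarith
    rw [show δ⁻¹ * ‖b‖ = ‖b‖ / δ by ring]
    exact (le_div_iff₀ hδ).mpr (by linarith)
  set vN : V := J ((↑u⁻¹ : V →L[ℂ] V) (P f)) with hvN
  have h1K : (1 + K) vN = (↑u⁻¹ : V →L[ℂ] V) (P f) := by
    simp only [add_apply, one_apply_eq_self, hvN, hJ1']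
  have hsol : (1 + P ∘L K) vN = P f := by
    rw [key vN, h1K]; exact hui _
  have hmem : vN ∈ W := by
    have h2 : vN + P (K vN) = P f := by
      have := hsol
      simpa [add_apply, one_apply_eq_self, comp_apply] using this
    have h3 : vN = P f - P (K vN) := by rw [← h2]; abel
    rw [h3]
    exact W.sub_mem (hPmem f) (hPmem _)
  refine ⟨vN, hmem, hsol, ?_, ?_⟩
  · intro w _ hw
    have e1 : ((1 : V →L[ℂ] V) - x) ((1 + K) w) = ((1 : V →L[ℂ] V) - x) ((1 + K) vN) := by
      rw [← key, ← key, hw, hsol]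
    have e2 : (1 + K) w = (1 + K) vN := by
      have := congrArg (fun b => (↑u⁻¹ : V →L[ℂ] V) b) e1
      simpa only [hiu] using this
    have e3 := congrArg (fun b => J b) e2
    simpa only [add_apply, one_apply_eq_self, hJ2'] using e3
  · set q : V := J f with hq
    set z : V := q - P q with hz
    have hPf : P f = P q + P (K q) := by
      conv_lhs => rw [← hJ1' f]
      rw [map_add]
    have h4 : (1 + P ∘L K) (q - vN) = z := by
      rw [map_sub, hsol, hPf]
      simp only [add_apply, one_apply_eq_self, comp_apply, hz]
      abel
    have h5a : (1 + K) (q - vN) = (↑u⁻¹ : V →L[ℂ] V) z := by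
      have := congrArg (fun b => (↑u⁻¹ : V →L[ℂ] V) b) ((key (q - vN)).symm.trans h4)
      simpa only [hiu] using this
    have h5 : q - vN = J ((↑u⁻¹ : V →L[ℂ] V) z) := by
      have := congrArg (fun b => J b) h5a
      simpa only [add_apply, one_apply_eq_self, hJ2'] using this
    -- ‖z‖ ≤ infDist q W
    have hzle : ‖z‖ ≤ Metric.infDist q (W : Set V) := by
      haveI : Nonempty (W : Set V) := ⟨⟨0, W.zero_mem⟩⟩
      rw [Metric.infDist_eq_iInf]
      refine le_ciInf fun yw => ?_
      obtain ⟨w, hw⟩ := yw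
      simp only [dist_eq_norm]
      have horth : q - P q ∈ Wᗮ := by
        rw [hPapp]; exact W.sub_starProjection_mem_orthogonal q
      have hinW : P q - w ∈ W := W.sub_mem (hPmem q) hw
      have hip : (inner ℂ (q - P q) (P q - w) : ℂ) = 0 :=
        Submodule.inner_left_of_mem_orthogonal hinW horth
      have hsum : q - w = (q - P q) + (P q - w) := by abel
      have hns : ‖q - w‖ ^ 2 = ‖q - P q‖ ^ 2 + ‖P q - w‖ ^ 2 := by
        rw [hsum]
        rw [@norm_add_sq ℂ _ _ _ _ (q - P q) (P q - w), hip]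
        simp
      have h0 : (0:ℝ) ≤ ‖q - w‖ := norm_nonneg _
      have h0' : (0:ℝ) ≤ ‖q - P q‖ := norm_nonneg _
      have : ‖q - P q‖ ^ 2 ≤ ‖q - w‖ ^ 2 := by nlinarith [sq_nonneg ‖P q - w‖]
      rw [hz]
      nlinarith
    have hinf0 : 0 ≤ Metric.infDist q (W : Set V) := Metric.infDist_nonneg
    calc ‖q - vN‖ = ‖J ((↑u⁻¹ : V →L[ℂ] V) z)‖ := by rw [h5]
      _ ≤ ‖J‖ * ‖(↑u⁻¹ : V →L[ℂ] V) z‖ := J.le_opNorm _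
      _ ≤ ‖J‖ * (δ⁻¹ * ‖z‖) :=
          mul_le_mul_of_nonneg_left (hnorm z) (norm_nonneg J)
      _ ≤ ‖J‖ * (δ⁻¹ * Metric.infDist q (W : Set V)) := by
          have := mul_le_mul_of_nonneg_left hzle (le_of_lt (inv_pos.mpr hδ))
          exact mul_le_mul_of_nonneg_left this (norm_nonneg J)
      _ = δ⁻¹ * ‖J‖ * Metric.infDist q (W : Set V) := by ring
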